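/- Under the hypotheses of the decomposition, each component system (Σ_ω, L_ω, ξ_ω) is a pure nonclassical state property system: its only d-classical properties are 0 and s(ω). -/

import Mathlib

/-- A state property system: `L` a complete lattice, `xi` assigns to each state
the set of actual properties. -/
structure SPS (S : Type*) (L : Type*) [CompleteLattice L] where
  xi : S → Set L
  bot_not_mem : ∀ p, ⊥ ∉ xi p
  sInf_mem : ∀ p, ∀ A : Set L, A ⊆ xi p → sInf A ∈ xi p
  le_iff : ∀ a b : L, a ≤ b ↔ ∀ p, a ∈ xi p → b ∈ xi p

/-- The Cartan map. -/
def SPS.kappa {S L : Type*} [CompleteLattice L] (T : SPS S L) (a : L) : Set S :=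
  {p | a ∈ T.xi p}

/-- Separation by a superselection rule. -/
def SPS.ssr {S L : Type*} [CompleteLattice L] (T : SPS S L) (a b : L) : Prop :=
  ∀ p, a ⊔ b ∈ T.xi p → a ∈ T.xi p ∨ b ∈ T.xi p

/-- d-classical property. -/
def SPS.dclassical {S L : Type*} [CompleteLattice L] (T : SPS S L) (a : L) : Prop :=
  ∃ c : L, a ⊔ c = ⊤ ∧ a ⊓ c = ⊥ ∧ T.ssr a c


/-- `B` is a closed set of the subspace induced on `A` by the closure space
with closed sets `F`. -/
def IsClosedIn {X : Type*} (F : Set (Set X)) (A B : Set X) : Prop :=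
  ∃ C ∈ F, B = C ∩ A

/-- A subset `A` is connected if the only subsets of `A` that are clopen in the
induced subspace are `∅` and `A`. -/
def ConnSub {X : Type*} (F : Set (Set X)) (A : Set X) : Prop :=
  ∀ B ⊆ A, IsClosedIn F A B → IsClosedIn F A (A \ B) → B = ∅ ∨ B = A

/-- The closure operator of the closure space. -/
def clOf {X : Type*} (F : Set (Set X)) (B : Set X) : Set X :=
  ⋂₀ {C | C ∈ F ∧ B ⊆ C}

/-- The connection component of a point. -/
def connComp {X : Type*} (F : Set (Set X)) (x : X) : Set X :=
  ⋃₀ {A | x ∈ A ∧ ConnSub F A}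

lemma connComp_conn {X : Type*} (F : Set (Set X)) (x : X) :
    ConnSub F (connComp F x) := by
  have main : ∀ B ⊆ connComp F x, IsClosedIn F (connComp F x) B →
      IsClosedIn F (connComp F x) (connComp F x \ B) →
      ∀ A, x ∈ A → ConnSub F A → B ∩ A = ∅ ∨ B ∩ A = A := by
    rintro B hB ⟨C, hC, hBC⟩ ⟨D, hD, hDC⟩ A hxA hA
    have hsub : A ⊆ connComp F x := fun z hz => ⟨A, ⟨hxA, hA⟩, hz⟩
    have h1 : B ∩ A = C ∩ A := by
      rw [hBC]; ext z; constructor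
      · rintro ⟨⟨h1, _⟩, h2⟩; exact ⟨h1, h2⟩
      · rintro ⟨h1, h2⟩; exact ⟨⟨h1, hsub h2⟩, h2⟩
    have h2 : A \ (B ∩ A) = D ∩ A := by
      ext z; constructor
      · rintro ⟨hzA, hz⟩
        have : z ∈ connComp F x \ B := ⟨hsub hzA, fun hzB => hz ⟨hzB, hzA⟩⟩
        rw [hDC] at this; exact ⟨this.1, hzA⟩
      · rintro ⟨h1, h2⟩
        refine ⟨h2, fun hz => ?_⟩
        have : z ∈ connComp F x \ B := by rw [hDC]; exact ⟨h1, hsub h2⟩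
        exact this.2 hz.1
    exact hA (B ∩ A) Set.inter_subset_right ⟨C, hC, h1⟩ ⟨D, hD, h2⟩
  intro B hB hcl1 hcl2
  by_cases hx : x ∈ B
  · right
    apply Set.Subset.antisymm hB
    rintro y ⟨A, ⟨hxA, hA⟩, hyA⟩
    rcases main B hB hcl1 hcl2 A hxA hA with h | h
    · exact absurd (Set.eq_empty_iff_forall_notMem.1 h x ⟨hx, hxA⟩) not_false
    · exact (show y ∈ B ∩ A by rw [h]; exact hyA).1
  · left
    rw [Set.eq_empty_iff_forall_notMem]
    intro y hy
    obtain ⟨A, ⟨hxA, hA⟩, hyA⟩ := hB hy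
    rcases main B hB hcl1 hcl2 A hxA hA with h | h
    · exact Set.eq_empty_iff_forall_notMem.1 h y ⟨hy, hyA⟩
    · exact hx (show x ∈ B ∩ A by rw [h]; exact hxA).1

theorem stmt17 {S L : Type*} [CompleteLattice L] (T : SPS S L) (a : L)
    (hcomp : ∃ p0 : S, T.kappa a = connComp (Set.range T.kappa) p0) :
    ∀ T' : SPS {p : S // p ∈ T.kappa a} (Set.Iic a),
      (∀ p, T'.xi p = {b : Set.Iic a | (b : L) ∈ T.xi p.1}) →
      ∀ b : Set.Iic a, T'.dclassical b → b = ⊥ ∨ b = ⊤ := by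
  rintro T' hxi b ⟨c, hsup, hinf, hssr⟩
  obtain ⟨p0, hw⟩ := hcomp
  have hba : (b : L) ≤ a := b.2
  have hca : (c : L) ≤ a := c.2
  have hinfL : (b : L) ⊓ (c : L) = ⊥ := by
    have := congrArg (Subtype.val) hinf
    simpa using this
  have hor : ∀ p : S, p ∈ T.kappa a →
      (b : L) ∈ T.xi p ∨ (c : L) ∈ T.xi p := by
    intro p hp
    have htop : b ⊔ c ∈ T'.xi ⟨p, hp⟩ := by
      rw [hxi, hsup]
      simpa [Set.mem_setOf_eq, SPS.kappa] using hp
    rcases hssr ⟨p, hp⟩ htop with h | h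
    · rw [hxi] at h; exact Or.inl h
    · rw [hxi] at h; exact Or.inr h
  have hnotboth : ∀ p : S, (b : L) ∈ T.xi p → (c : L) ∈ T.xi p → False := by
    intro p h1 h2
    have hmem : sInf {(b : L), (c : L)} ∈ T.xi p := by
      apply T.sInf_mem
      intro x hx
      rcases hx with h | h
      · exact h ▸ h1
      · exact (Set.mem_singleton_iff.1 h) ▸ h2
    rw [sInf_pair, hinfL] at hmem
    exact T.bot_not_mem p hmem
  have hkb : T.kappa (b : L) ⊆ T.kappa a := fun p hp =>
    (T.le_iff (b : L) a).1 hba p hp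
  have hclosed1 : IsClosedIn (Set.range T.kappa) (connComp (Set.range T.kappa) p0)
      (T.kappa (b : L)) :=
    ⟨T.kappa (b : L), Set.mem_range_self _, by
      rw [← hw]; exact (Set.inter_eq_self_of_subset_left hkb).symm⟩
  have hcompl : connComp (Set.range T.kappa) p0 \ T.kappa (b : L)
      = T.kappa (c : L) ∩ connComp (Set.range T.kappa) p0 := by
    rw [← hw]
    ext p
    constructor
    · rintro ⟨hp, hnb⟩
      rcases hor p hp with h | h
      · exact absurd h hnb
      · exact ⟨h, hp⟩
    · rintro ⟨hc, hp⟩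
      exact ⟨hp, fun hb => hnotboth p hb hc⟩
  have hclosed2 : IsClosedIn (Set.range T.kappa) (connComp (Set.range T.kappa) p0)
      (connComp (Set.range T.kappa) p0 \ T.kappa (b : L)) :=
    ⟨T.kappa (c : L), Set.mem_range_self _, hcompl⟩
  have hBsub : T.kappa (b : L) ⊆ connComp (Set.range T.kappa) p0 := hw ▸ hkb
  rcases connComp_conn (Set.range T.kappa) p0 (T.kappa (b : L)) hBsub hclosed1 hclosed2
      with h | h
  · left
    have hle : (b : L) ≤ ⊥ := by
      rw [T.le_iff]
      intro p hp
      exact absurd (Set.eq_empty_iff_forall_notMem.1 h p hp) not_false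
    apply Subtype.ext
    simpa using le_bot_iff.1 hle
  · right
    have hab : a ≤ (b : L) := by
      rw [T.le_iff]
      intro p hp
      have : p ∈ T.kappa (b : L) := by rw [h, ← hw]; exact hp
      exact this
    apply Subtype.ext
    have : (b : L) = a := le_antisymm hba hab
    simpa using this
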